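/- Let N ≥ 1 be a natural number and b a real number with 0 < b ≤ 1/2. Let F : ℝ → ℝ be the cumulative distribution function of the Gamma distribution with shape 1/2 and rate 1/2 (i.e., of the chi-squared distribution with one degree of freedom), and define the minimum attainable p-value ψ(a) = 1 − F(2·N·B(a,b)). Then ψ is antitone on (0,b]: for all a₁, a₂ with 0 < a₁ ≤ a₂ ≤ b, ψ(a₂) ≤ ψ(a₁). Consequently, for any threshold σ ∈ (0,b], every a ∈ (0,b] with ψ(a) ≤ ψ(σ) satisfies a ≥ σ. -/

import Mathlib

open Real
open MeasureTheory Set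

lemma gammaCDF_strict {x y : ℝ} (hx : 0 ≤ x) (hxy : x < y) :
    ProbabilityTheory.cdf (ProbabilityTheory.gammaMeasure (1/2) (1/2)) x
      < ProbabilityTheory.cdf (ProbabilityTheory.gammaMeasure (1/2) (1/2)) y := by
  have h2 : (0:ℝ) < 1/2 := by norm_num
  set μ := ProbabilityTheory.gammaMeasure (1/2 : ℝ) (1/2 : ℝ) with hμ
  haveI : IsProbabilityMeasure μ := ProbabilityTheory.isProbabilityMeasure_gammaMeasure h2 h2
  have hIoc : 0 < μ (Ioc x y) := by
    rw [hμ, ProbabilityTheory.gammaMeasure, withDensity_apply _ measurableSet_Ioc]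
    by_contra h
    push_neg at h
    have h0 : ∫⁻ t in Ioc x y, ProbabilityTheory.gammaPDF (1/2) (1/2) t = 0 := le_antisymm h zero_le
    have hmeas : Measurable (ProbabilityTheory.gammaPDF (1/2 : ℝ) (1/2 : ℝ)) := by
      unfold ProbabilityTheory.gammaPDF
      exact (ProbabilityTheory.measurable_gammaPDFReal _ _).ennreal_ofReal
    rw [lintegral_eq_zero_iff hmeas] at h0
    have := (ae_restrict_iff' measurableSet_Ioc).mp h0
    have hnm : ∀ᵐ t, t ∉ Ioc x y := by
      refine this.mono fun t ht hmem => ?_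
      have hpos : 0 < ProbabilityTheory.gammaPDFReal (1/2) (1/2) t :=
        ProbabilityTheory.gammaPDFReal_pos h2 h2 (lt_of_le_of_lt hx hmem.1)
      have := ht hmem
      simp only [ProbabilityTheory.gammaPDF, Pi.zero_apply, ENNReal.ofReal_eq_zero] at this
      linarith
    have hvol : volume (Ioc x y) = 0 := measure_eq_zero_iff_ae_notMem.mpr hnm
    simp [Real.volume_Ioc] at hvol
    linarith
  have hle : μ (Iic x) + μ (Ioc x y) = μ (Iic y) := by
    rw [← measure_union (Set.Iic_disjoint_Ioc le_rfl) measurableSet_Ioc, Set.Iic_union_Ioc_eq_Iic hxy.le]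
  rw [ProbabilityTheory.cdf_eq_real, ProbabilityTheory.cdf_eq_real, measureReal_def, measureReal_def, ← hle,
    ENNReal.toReal_add (measure_ne_top μ _) (measure_ne_top μ _)]
  exact lt_add_of_pos_right _ (ENNReal.toReal_pos hIoc.ne' (measure_ne_top μ _))

lemma B_strictMono {b : ℝ} (hb0 : 0 < b) (hb : b ≤ 1/2) :
    StrictMonoOn (fun a : ℝ => a * log (1 / b) + (b - a) * log ((b - a) / ((1 - a) * b))
        + (1 - b) * log (1 / (1 - a))) (Set.Icc 0 b) := by
  set g : ℝ → ℝ := fun a => a * log (1 / b)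
      + ((b - a) * log (b - a) - (b - a) * log ((1 - a) * b)) + (1 - b) * log (1 / (1 - a))
    with hg
  have heq : Set.EqOn (fun a : ℝ => a * log (1 / b) + (b - a) * log ((b - a) / ((1 - a) * b))
      + (1 - b) * log (1 / (1 - a))) g (Set.Icc 0 b) := by
    intro a ha
    simp only [hg]
    rcases eq_or_lt_of_le ha.2 with h | h
    · subst h; simp
    · have h1a : (0:ℝ) < 1 - a := by linarith
      have hba : (0:ℝ) < b - a := by linarith
      have hab : (0:ℝ) < (1 - a) * b := by positivity
      rw [Real.log_div hba.ne' hab.ne']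
      ring
  have hcont : ContinuousOn g (Set.Icc 0 b) := by
    intro a ha
    have h1a : (0:ℝ) < 1 - a := by
      have := ha.2; linarith
    apply ContinuousAt.continuousWithinAt
    apply ContinuousAt.add
    apply ContinuousAt.add
    · exact (continuous_id.mul continuous_const).continuousAt
    · apply ContinuousAt.sub
      · exact (Real.continuous_mul_log.comp (continuous_const.sub continuous_id)).continuousAt
      · apply ContinuousAt.mul (by fun_prop)
        exact (Real.continuousAt_log (by positivity)).comp (by fun_prop)
    · apply ContinuousAt.mul continuousAt_const
      exact (Real.continuousAt_log (by positivity)).comp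
        (ContinuousAt.div continuousAt_const (by fun_prop) h1a.ne')
  have hderiv : ∀ a ∈ Set.Ioo (0:ℝ) b, HasDerivAt g (log (1 - a) - log (b - a)) a := by
    intro a ha
    have hba : 0 < b - a := by linarith [ha.2]
    have h1a : (0:ℝ) < 1 - a := by linarith [ha.2]
    have h1 : HasDerivAt (fun a : ℝ => a * log (1 / b)) (log (1 / b)) a := by
      simpa using (hasDerivAt_id a).mul_const (log (1 / b))
    have hi : HasDerivAt (fun a : ℝ => b - a) (-1) a := by
      simpa using (hasDerivAt_id' a).const_sub b
    have h2 : HasDerivAt (fun a : ℝ => (b - a) * log (b - a)) ((log (b - a) + 1) * (-1)) a :=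
      (Real.hasDerivAt_mul_log hba.ne').comp a hi
    have hinner : HasDerivAt (fun a : ℝ => (1 - a) * b) (-b) a := by
      simpa using ((hasDerivAt_const a (1:ℝ)).sub (hasDerivAt_id a)).mul_const b
    have h3 : HasDerivAt (fun a : ℝ => (b - a) * log ((1 - a) * b))
        ((-1) * log ((1 - a) * b) + (b - a) * (((1 - a) * b)⁻¹ * (-b))) a := by
      exact HasDerivAt.mul hi ((Real.hasDerivAt_log (by positivity)).comp a hinner)
    have h4i : HasDerivAt (fun a : ℝ => 1 / (1 - a)) (-(-1) / (1 - a)^2) a := by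
      simp only [one_div]
      exact (((hasDerivAt_id' a).const_sub (1:ℝ)).inv h1a.ne').congr_deriv (by ring)
    have h4 : HasDerivAt (fun a : ℝ => (1 - b) * log (1 / (1 - a)))
        ((1 - b) * ((1 / (1 - a))⁻¹ * (-(-1) / (1 - a)^2))) a :=
      (((Real.hasDerivAt_log (by positivity)).comp a h4i)).const_mul (1 - b)
    have := ((h1.add (h2.sub h3)).add h4)
    refine this.congr_deriv ?_
    symm
    rw [Real.log_mul h1a.ne' hb0.ne']
    simp only [one_div, Real.log_inv]
    field_simp
    ring
  have := strictMonoOn_of_deriv_pos (convex_Icc 0 b) hcont (fun x hx => ?_)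
  · exact fun x hx y hy hxy => by
      rw [heq hx, heq hy]; exact this hx hy hxy
  · rw [interior_Icc] at hx
    rw [(hderiv x hx).deriv]
    have : b - x < 1 - x := by linarith
    have hba : 0 < b - x := by linarith [hx.2]
    simpa using Real.log_lt_log hba this


/-- Antitonicity of the minimum attainable p-value: with `F` the CDF of the Gamma
distribution with shape `1/2` and rate `1/2` (the chi-squared distribution with one
degree of freedom) and `ψ(a) = 1 - F(2N·B(a,b))`, the function `ψ` is antitone on
`(0,b]`; consequently, for any threshold `σ ∈ (0,b]`, every `a ∈ (0,b]` with
`ψ(a) ≤ ψ(σ)` satisfies `a ≥ σ`. -/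
theorem min_pvalue_antitone (N : ℕ) (hN : 1 ≤ N) (b : ℝ) (hb0 : 0 < b)
    (hb : b ≤ 1/2) (ψ : ℝ → ℝ)
    (hψ : ∀ a : ℝ, ψ a = 1 - ProbabilityTheory.cdf (ProbabilityTheory.gammaMeasure (1/2) (1/2))
      (2 * (N : ℝ) * (a * log (1 / b) + (b - a) * log ((b - a) / ((1 - a) * b))
        + (1 - b) * log (1 / (1 - a))))) :
    (∀ a₁ a₂ : ℝ, 0 < a₁ → a₁ ≤ a₂ → a₂ ≤ b → ψ a₂ ≤ ψ a₁) ∧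
    (∀ σ ∈ Set.Ioc (0 : ℝ) b, ∀ a ∈ Set.Ioc (0 : ℝ) b, ψ a ≤ ψ σ → σ ≤ a) := by
  set Bf : ℝ → ℝ := fun a : ℝ => a * log (1 / b) + (b - a) * log ((b - a) / ((1 - a) * b))
      + (1 - b) * log (1 / (1 - a)) with hBf
  have hmono : StrictMonoOn Bf (Set.Icc 0 b) := B_strictMono hb0 hb
  have hB0 : Bf 0 = 0 := by
    simp [hBf, div_self hb0.ne']
  have hψ' : ∀ a : ℝ, ψ a = 1 - ProbabilityTheory.cdf (ProbabilityTheory.gammaMeasure (1/2) (1/2))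
      (2 * (N : ℝ) * Bf a) := hψ
  have hNpos : (0:ℝ) < 2 * (N : ℝ) := by
    have : (1:ℝ) ≤ (N:ℝ) := by exact_mod_cast hN
    linarith
  constructor
  · intro a₁ a₂ h1 h12 h2b
    rw [hψ', hψ']
    apply sub_le_sub_left
    apply (ProbabilityTheory.cdf (ProbabilityTheory.gammaMeasure (1/2) (1/2))).mono
    have : Bf a₁ ≤ Bf a₂ :=
      hmono.monotoneOn ⟨by linarith, by linarith⟩ ⟨by linarith, h2b⟩ h12
    nlinarith
  · intro σ hσ a ha hle
    by_contra h
    push_neg at h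
    have hBa : 0 < Bf a := by
      have := hmono ⟨le_rfl, hb0.le⟩ ⟨ha.1.le, ha.2⟩ ha.1
      rwa [hB0] at this
    have hBas : Bf a < Bf σ := hmono ⟨ha.1.le, ha.2⟩ ⟨hσ.1.le, hσ.2⟩ h
    have hF : ProbabilityTheory.cdf (ProbabilityTheory.gammaMeasure (1/2) (1/2)) (2 * (N:ℝ) * Bf a)
        < ProbabilityTheory.cdf (ProbabilityTheory.gammaMeasure (1/2) (1/2)) (2 * (N:ℝ) * Bf σ) :=
      gammaCDF_strict (by positivity) (by nlinarith)
    rw [hψ' a, hψ' σ] at hle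
    linarith
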